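/- Let $Q$ be a reversible Markov operator on a finite state space $V$ with stationary measure $\pi$ (i.e., $q(x,y) := \pi(x) Q(x,y)$ is symmetric, nonnegative, with $\sum_y Q(x,y) = 1$). Then for any function $\psi : V \to [0,1]$ with $\|\psi\|_\pi > 0$, there exists a threshold $h \in (0,1)$ such that the level set $S_h = \{x \in V : \psi(x)^2 \geq h\}$ satisfies $\frac{\langle \mathbf{1}_{S_h}, (I-Q)\mathbf{1}_{S_h}\rangle_\pi}{\pi(S_h)} \leq \sqrt{2\, \frac{\langle \psi, (I-Q)\psi\rangle_\pi}{\|\psi\|_\pi^2}}$. -/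

import Mathlib

open Finset

section helpers
open MeasureTheory Set

lemma ind_eq (c : ℝ) : (fun h : ℝ => if h ≤ c then (1:ℝ) else 0) = Set.indicator (Set.Iic c) (fun _ => (1:ℝ)) := by
  funext h; simp [Set.indicator, Set.mem_Iic]

lemma ind_intOn (c M : ℝ) : IntegrableOn (fun h : ℝ => if h ≤ c then (1:ℝ) else 0) (Set.Ioc 0 M) := by
  rw [ind_eq]
  exact (integrableOn_const measure_Ioc_lt_top.ne).indicator measurableSet_Iic

lemma ind_int (c M : ℝ) (h0 : 0 ≤ c) (h1 : c ≤ M) :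
    ∫ h in Set.Ioc 0 M, (if h ≤ c then (1:ℝ) else 0) = c := by
  rw [ind_eq, MeasureTheory.integral_indicator measurableSet_Iic]
  rw [Measure.restrict_restrict measurableSet_Iic, setIntegral_const]
  have : Set.Iic c ∩ Set.Ioc 0 M = Set.Ioc 0 c := by
    ext x; simp only [Set.mem_inter_iff, Set.mem_Iic, Set.mem_Ioc]
    constructor
    · rintro ⟨a, b, _⟩; exact ⟨b, a⟩
    · rintro ⟨a, b⟩; exact ⟨b, a, le_trans b h1⟩
  rw [this, measureReal_def, Real.volume_Ioc]
  simp [ENNReal.toReal_ofReal h0]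

lemma exists_nonneg_of_int {f : ℝ → ℝ} {M : ℝ} (hM : 0 < M)
    (hi : IntegrableOn f (Set.Ioc 0 M))
    (h : 0 ≤ ∫ h in Set.Ioc 0 M, f h) : ∃ h ∈ Set.Ioo 0 M, 0 ≤ f h := by
  by_contra hc
  push_neg at hc
  have hae : Set.Ioo (0:ℝ) M =ᵐ[volume] Set.Ioc 0 M := Ioo_ae_eq_Ioc
  have hi' : IntegrableOn f (Set.Ioo 0 M) := hi.mono_set Set.Ioo_subset_Ioc_self
  have heq : ∫ h in Set.Ioo 0 M, f h = ∫ h in Set.Ioc 0 M, f h :=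
    setIntegral_congr_set hae
  have hneg : ∫ h in Set.Ioo 0 M, f h < 0 := by
    have hnn : 0 ≤ᵐ[volume.restrict (Set.Ioo 0 M)] (fun h => - f h) := by
      filter_upwards [ae_restrict_mem measurableSet_Ioo] with x hx
      simp only [Pi.zero_apply]; linarith [hc x hx]
    have := (setIntegral_pos_iff_support_of_nonneg_ae hnn hi'.neg).2 ?_
    · rw [integral_neg] at this; linarith
    · have hsub : Set.Ioo 0 M ⊆ Function.support (fun h => - f h) ∩ Set.Ioo 0 M := by
        intro x hx
        exact ⟨by simp only [Function.mem_support]; intro h; linarith [hc x hx], hx⟩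
      calc (0:ENNReal) < volume (Set.Ioo 0 M) := by simp [Real.volume_Ioo, hM]
        _ ≤ _ := measure_mono hsub
  rw [heq] at hneg; linarith

lemma ind_mul_ind (a b h : ℝ) :
    (if h ≤ a then (1:ℝ) else 0) * (if h ≤ b then (1:ℝ) else 0)
      = if h ≤ min a b then (1:ℝ) else 0 := by
  by_cases h1 : h ≤ a <;> by_cases h2 : h ≤ b <;> simp [h1, h2, le_min_iff]

end helpers

theorem discrete_cheeger {V : Type*} [Fintype V] [Nonempty V]
    (Q : Matrix V V ℝ) (π : V → ℝ)
    (hπpos : ∀ x, 0 < π x) (hπ1 : ∑ x, π x = 1)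
    (hQ0 : ∀ x y, 0 ≤ Q x y) (hQrow : ∀ x, ∑ y, Q x y = 1)
    (hrev : ∀ x y, π x * Q x y = π y * Q y x)
    (ψ : V → ℝ) (hψ : ∀ x, ψ x ∈ Set.Icc (0 : ℝ) 1)
    (hψpos : 0 < ∑ x, π x * ψ x ^ 2) :
    ∃ h : ℝ, 0 < h ∧ h < 1 ∧
      (0 < ∑ x, π x * (if h ≤ ψ x ^ 2 then (1 : ℝ) else 0)) ∧
      (∑ x, π x * (if h ≤ ψ x ^ 2 then (1 : ℝ) else 0) *
          ((if h ≤ ψ x ^ 2 then (1 : ℝ) else 0) -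
            ∑ y, Q x y * (if h ≤ ψ y ^ 2 then (1 : ℝ) else 0))) /
        (∑ x, π x * (if h ≤ ψ x ^ 2 then (1 : ℝ) else 0))
      ≤ Real.sqrt (2 * (∑ x, π x * ψ x * (ψ x - ∑ y, Q x y * ψ y)) /
          (∑ x, π x * ψ x ^ 2)) := by
  classical
  set q : V → V → ℝ := fun x y => π x * Q x y with hq_def
  have hq0 : ∀ x y, 0 ≤ q x y := fun x y => mul_nonneg (hπpos x).le (hQ0 x y)
  set A : ℝ := ∑ x, π x * ψ x ^ 2 with hA_def
  set E : ℝ := ∑ x, π x * ψ x * (ψ x - ∑ y, Q x y * ψ y) with hE_def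
  set C : ℝ := Real.sqrt (2 * E / A) with hC_def
  -- row sums of q against a function of x
  have hrow : ∀ (f : V → ℝ), ∑ x, ∑ y, q x y * f x = ∑ x, π x * f x := by
    intro f
    refine Finset.sum_congr rfl fun x _ => ?_
    have : ∑ y, q x y * f x = (π x * f x) * ∑ y, Q x y := by
      rw [Finset.mul_sum]
      exact Finset.sum_congr rfl fun y _ => by simp only [hq_def]; ring
    rw [this, hQrow, mul_one]
  have hcol : ∀ (f : V → ℝ), ∑ x, ∑ y, q x y * f y = ∑ x, π x * f x := by
    intro f
    rw [Finset.sum_comm]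
    calc ∑ y, ∑ x, q x y * f y = ∑ y, ∑ x, q y x * f y := by
          refine Finset.sum_congr rfl fun y _ => Finset.sum_congr rfl fun x _ => ?_
          simp only [hq_def]; rw [hrev]
      _ = ∑ x, π x * f x := hrow f
  have hA1 : ∑ x, ∑ y, q x y * ψ x ^ 2 = A := hrow _
  have hA2 : ∑ x, ∑ y, q x y * ψ y ^ 2 = A := hcol _
  -- cross term
  set cross : ℝ := ∑ x, ∑ y, q x y * (ψ x * ψ y) with hcross_def
  have hE : E = A - cross := by
    rw [hE_def, hA_def, hcross_def, ← Finset.sum_sub_distrib]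
    refine Finset.sum_congr rfl fun x _ => ?_
    rw [mul_sub, Finset.mul_sum]
    congr 1
    · ring
    · exact Finset.sum_congr rfl fun y _ => by simp only [hq_def]; ring
  have hEd : ∑ x, ∑ y, q x y * (ψ x - ψ y) ^ 2 = 2 * E := by
    have expand : ∑ x, ∑ y, q x y * (ψ x - ψ y) ^ 2
        = ∑ x, ((∑ y, q x y * ψ x ^ 2) + (∑ y, q x y * ψ y ^ 2)
            - 2 * ∑ y, q x y * (ψ x * ψ y)) := by
      refine Finset.sum_congr rfl fun x _ => ?_
      rw [Finset.mul_sum, ← Finset.sum_add_distrib, ← Finset.sum_sub_distrib]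
      exact Finset.sum_congr rfl fun y _ => by ring
    rw [expand, Finset.sum_sub_distrib, Finset.sum_add_distrib, hA1, hA2,
      ← Finset.mul_sum, ← hcross_def, hE]
    ring
  have hEnn : 0 ≤ E := by
    have : 0 ≤ ∑ x, ∑ y, q x y * (ψ x - ψ y) ^ 2 :=
      Finset.sum_nonneg fun x _ => Finset.sum_nonneg fun y _ =>
        mul_nonneg (hq0 x y) (sq_nonneg _)
    linarith [hEd]
  have hplus : ∑ x, ∑ y, q x y * (ψ x + ψ y) ^ 2 ≤ 4 * A := by
    have step : ∑ x, ∑ y, q x y * (ψ x + ψ y) ^ 2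
        ≤ ∑ x, ∑ y, (2 * (q x y * ψ x ^ 2) + 2 * (q x y * ψ y ^ 2)) := by
      refine Finset.sum_le_sum fun x _ => Finset.sum_le_sum fun y _ => ?_
      nlinarith [hq0 x y, sq_nonneg (ψ x - ψ y), mul_nonneg (hq0 x y) (sq_nonneg (ψ x - ψ y))]
    refine step.trans ?_
    have : ∑ x, ∑ y, (2 * (q x y * ψ x ^ 2) + 2 * (q x y * ψ y ^ 2))
        = 2 * (∑ x, ∑ y, q x y * ψ x ^ 2) + 2 * (∑ x, ∑ y, q x y * ψ y ^ 2) := by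
      simp only [Finset.sum_add_distrib, Finset.mul_sum]
    rw [this, hA1, hA2]; linarith
  -- Cauchy-Schwarz
  have hCS : (∑ x, ∑ y, q x y * |ψ x ^ 2 - ψ y ^ 2|) ^ 2 ≤ (2 * E) * (4 * A) := by
    have habs : ∀ x y, q x y * |ψ x ^ 2 - ψ y ^ 2|
        = (Real.sqrt (q x y) * |ψ x - ψ y|) * (Real.sqrt (q x y) * (ψ x + ψ y)) := by
      intro x y
      have h1 : ψ x ^ 2 - ψ y ^ 2 = (ψ x - ψ y) * (ψ x + ψ y) := by ring
      have h2 : |ψ x + ψ y| = ψ x + ψ y :=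
        abs_of_nonneg (add_nonneg (hψ x).1 (hψ y).1)
      rw [h1, abs_mul, h2]
      have h3 : Real.sqrt (q x y) * Real.sqrt (q x y) = q x y :=
        Real.mul_self_sqrt (hq0 x y)
      calc q x y * (|ψ x - ψ y| * (ψ x + ψ y))
          = (Real.sqrt (q x y) * Real.sqrt (q x y)) * (|ψ x - ψ y| * (ψ x + ψ y)) := by
            rw [h3]
        _ = Real.sqrt (q x y) * |ψ x - ψ y| * (Real.sqrt (q x y) * (ψ x + ψ y)) := by ring
    have key := Finset.sum_mul_sq_le_sq_mul_sq Finset.univ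
      (fun p : V × V => Real.sqrt (q p.1 p.2) * |ψ p.1 - ψ p.2|)
      (fun p : V × V => Real.sqrt (q p.1 p.2) * (ψ p.1 + ψ p.2))
    have e1 : ∑ p : V × V, (Real.sqrt (q p.1 p.2) * |ψ p.1 - ψ p.2|)
          * (Real.sqrt (q p.1 p.2) * (ψ p.1 + ψ p.2))
        = ∑ x, ∑ y, q x y * |ψ x ^ 2 - ψ y ^ 2| := by
      rw [Fintype.sum_prod_type]
      exact Finset.sum_congr rfl fun x _ => Finset.sum_congr rfl fun y _ => (habs x y).symm
    have e2 : ∑ p : V × V, (Real.sqrt (q p.1 p.2) * |ψ p.1 - ψ p.2|) ^ 2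
        = ∑ x, ∑ y, q x y * (ψ x - ψ y) ^ 2 := by
      rw [Fintype.sum_prod_type]
      refine Finset.sum_congr rfl fun x _ => Finset.sum_congr rfl fun y _ => ?_
      show (Real.sqrt (q x y) * |ψ x - ψ y|) ^ 2 = q x y * (ψ x - ψ y) ^ 2
      rw [mul_pow, Real.sq_sqrt (hq0 x y), sq_abs]
    have e3 : ∑ p : V × V, (Real.sqrt (q p.1 p.2) * (ψ p.1 + ψ p.2)) ^ 2
        = ∑ x, ∑ y, q x y * (ψ x + ψ y) ^ 2 := by
      rw [Fintype.sum_prod_type]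
      refine Finset.sum_congr rfl fun x _ => Finset.sum_congr rfl fun y _ => ?_
      show (Real.sqrt (q x y) * (ψ x + ψ y)) ^ 2 = q x y * (ψ x + ψ y) ^ 2
      rw [mul_pow, Real.sq_sqrt (hq0 x y)]
    rw [e1, e2, e3] at key
    refine key.trans ?_
    rw [hEd]
    have h2E : 0 ≤ ∑ x, ∑ y, q x y * (ψ x + ψ y) ^ 2 :=
      Finset.sum_nonneg fun x _ => Finset.sum_nonneg fun y _ =>
        mul_nonneg (hq0 x y) (sq_nonneg _)
    nlinarith [hplus, hEnn]
  -- key inequality with min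
  set D : ℝ := ∑ x, ∑ y, q x y * |ψ x ^ 2 - ψ y ^ 2| with hD_def
  have hD0 : 0 ≤ D :=
    Finset.sum_nonneg fun x _ => Finset.sum_nonneg fun y _ =>
      mul_nonneg (hq0 x y) (abs_nonneg _)
  have hsplit3 : ∑ x, ∑ y, (q x y * ψ x ^ 2 + q x y * ψ y ^ 2
      - q x y * |ψ x ^ 2 - ψ y ^ 2|) = A + A - D := by
    simp only [Finset.sum_add_distrib, Finset.sum_sub_distrib]
    rw [hA1, hA2]
  have hmin : ∑ x, ∑ y, q x y * min (ψ x ^ 2) (ψ y ^ 2) = A - D / 2 := by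
    have step : ∑ x, ∑ y, q x y * min (ψ x ^ 2) (ψ y ^ 2)
        = (∑ x, ∑ y, (q x y * ψ x ^ 2 + q x y * ψ y ^ 2
            - q x y * |ψ x ^ 2 - ψ y ^ 2|)) / 2 := by
      rw [Finset.sum_div]
      refine Finset.sum_congr rfl fun x _ => ?_
      rw [Finset.sum_div]
      refine Finset.sum_congr rfl fun y _ => ?_
      rcases le_total (ψ x ^ 2) (ψ y ^ 2) with hle | hle
      · rw [min_eq_left hle, abs_of_nonpos (by linarith)]; ring
      · rw [min_eq_right hle, abs_of_nonneg (by linarith)]; ring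
    rw [step, hsplit3]; ring
  have hApos : 0 < A := hψpos
  have hkey : A - ∑ x, ∑ y, q x y * min (ψ x ^ 2) (ψ y ^ 2) ≤ C * A := by
    rw [hmin]
    have hCA : C * A = Real.sqrt (2 * E * A) := by
      have hfs : 2 * E / A * A ^ 2 = 2 * E * A := by
        field_simp
      calc C * A = Real.sqrt (2 * E / A) * Real.sqrt (A ^ 2) := by
            rw [Real.sqrt_sq hApos.le]
        _ = Real.sqrt (2 * E / A * A ^ 2) :=
            (Real.sqrt_mul (div_nonneg (by linarith) hApos.le) _).symm
        _ = Real.sqrt (2 * E * A) := by rw [hfs]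
    have h4 : Real.sqrt ((2 * E) * (4 * A)) = 2 * Real.sqrt (2 * E * A) := by
      rw [show (2 * E) * (4 * A) = 2 ^ 2 * (2 * E * A) from by ring,
        Real.sqrt_mul (by positivity) _, Real.sqrt_sq (by norm_num : (0:ℝ) ≤ 2)]
    have hs := Real.sqrt_le_sqrt hCS
    rw [Real.sqrt_sq hD0, h4] at hs
    have hgoal : A - (A - D / 2) = D / 2 := by ring
    rw [hgoal, hCA]
    linarith
  -- maximum of ψ²
  obtain ⟨x₀, -, hx₀⟩ := Finset.exists_max_image Finset.univ (fun x => ψ x ^ 2)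
    ⟨Classical.arbitrary V, Finset.mem_univ _⟩
  set M : ℝ := ψ x₀ ^ 2 with hM_def
  have hxM : ∀ x, ψ x ^ 2 ≤ M := fun x => hx₀ x (Finset.mem_univ x)
  have hM0 : 0 < M := by
    by_contra hcon
    push_neg at hcon
    have : A ≤ 0 := Finset.sum_nonpos fun x _ =>
      mul_nonpos_of_nonneg_of_nonpos (hπpos x).le (le_trans (hxM x) hcon)
    linarith
  have hM1 : M ≤ 1 := by
    have h1 := (hψ x₀).1; have h2 := (hψ x₀).2; nlinarith
  -- integral quantities
  set P : ℝ → ℝ := fun h => ∑ x, π x * (if h ≤ ψ x ^ 2 then (1:ℝ) else 0) with hP_def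
  set Cr : ℝ → ℝ := fun h => ∑ x, ∑ y, q x y *
      ((if h ≤ ψ x ^ 2 then (1:ℝ) else 0) * (if h ≤ ψ y ^ 2 then (1:ℝ) else 0)) with hCr_def
  have hPint : MeasureTheory.IntegrableOn P (Set.Ioc 0 M) := by
    apply MeasureTheory.integrable_finset_sum
    intro x _
    exact (ind_intOn (ψ x ^ 2) M).const_mul (π x)
  have hCrint : MeasureTheory.IntegrableOn Cr (Set.Ioc 0 M) := by
    apply MeasureTheory.integrable_finset_sum
    intro x _
    apply MeasureTheory.integrable_finset_sum
    intro y _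
    have : (fun h : ℝ => q x y * ((if h ≤ ψ x ^ 2 then (1:ℝ) else 0)
        * (if h ≤ ψ y ^ 2 then (1:ℝ) else 0)))
        = fun h : ℝ => q x y * (if h ≤ min (ψ x ^ 2) (ψ y ^ 2) then (1:ℝ) else 0) := by
      funext h; rw [ind_mul_ind]
    rw [this]
    exact (ind_intOn _ M).const_mul _
  have hPval : ∫ h in Set.Ioc (0:ℝ) M, P h = A := by
    rw [hP_def]
    rw [MeasureTheory.integral_finset_sum _
      (fun x _ => (ind_intOn (ψ x ^ 2) M).const_mul (π x))]
    refine Finset.sum_congr rfl fun x _ => ?_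
    rw [MeasureTheory.integral_const_mul, ind_int _ _ (sq_nonneg _) (hxM x)]
  have hCrval : ∫ h in Set.Ioc (0:ℝ) M, Cr h
      = ∑ x, ∑ y, q x y * min (ψ x ^ 2) (ψ y ^ 2) := by
    have hrw : Cr = fun h => ∑ x, ∑ y, q x y *
        (if h ≤ min (ψ x ^ 2) (ψ y ^ 2) then (1:ℝ) else 0) := by
      funext h
      exact Finset.sum_congr rfl fun x _ => Finset.sum_congr rfl fun y _ => by
        rw [ind_mul_ind]
    rw [hrw]
    rw [MeasureTheory.integral_finset_sum _ (fun x _ =>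
      MeasureTheory.integrable_finset_sum _ (fun y _ => (ind_intOn _ M).const_mul _))]
    refine Finset.sum_congr rfl fun x _ => ?_
    rw [MeasureTheory.integral_finset_sum _ (fun y _ => (ind_intOn _ M).const_mul _)]
    refine Finset.sum_congr rfl fun y _ => ?_
    rw [MeasureTheory.integral_const_mul,
      ind_int _ _ (le_min (sq_nonneg _) (sq_nonneg _)) (min_le_of_left_le (hxM x))]
  -- the function to integrate
  set F : ℝ → ℝ := fun h => C * P h - P h + Cr h with hF_def
  have hFint : MeasureTheory.IntegrableOn F (Set.Ioc 0 M) :=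
    ((hPint.const_mul C).sub hPint).add hCrint
  have hsubint : MeasureTheory.IntegrableOn (fun h => C * P h - P h) (Set.Ioc 0 M) :=
    (hPint.const_mul C).sub hPint
  have hFval : 0 ≤ ∫ h in Set.Ioc (0:ℝ) M, F h := by
    have hadd : ∫ h in Set.Ioc (0:ℝ) M, F h
        = (∫ h in Set.Ioc (0:ℝ) M, (C * P h - P h))
          + ∫ h in Set.Ioc (0:ℝ) M, Cr h :=
      MeasureTheory.integral_add hsubint hCrint
    have hsubval : ∫ h in Set.Ioc (0:ℝ) M, (C * P h - P h)
        = (∫ h in Set.Ioc (0:ℝ) M, C * P h) - ∫ h in Set.Ioc (0:ℝ) M, P h :=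
      MeasureTheory.integral_sub (hPint.const_mul C) hPint
    have hcmul : ∫ h in Set.Ioc (0:ℝ) M, C * P h
        = C * ∫ h in Set.Ioc (0:ℝ) M, P h := MeasureTheory.integral_const_mul C P
    rw [hadd, hsubval, hcmul, hPval, hCrval]
    linarith [hkey, hmin]
  obtain ⟨h, hh, hFh⟩ := exists_nonneg_of_int hM0 hFint hFval
  have hPh : 0 < P h := by
    apply Finset.sum_pos'
    · intro x _
      exact mul_nonneg (hπpos x).le (by split_ifs <;> norm_num)
    · exact ⟨x₀, Finset.mem_univ _, by rw [if_pos (le_of_lt hh.2)]; simpa using hπpos x₀⟩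
  refine ⟨h, hh.1, lt_of_lt_of_le hh.2 hM1, hPh, ?_⟩
  have hEcut : (∑ x, π x * (if h ≤ ψ x ^ 2 then (1 : ℝ) else 0) *
        ((if h ≤ ψ x ^ 2 then (1 : ℝ) else 0) -
          ∑ y, Q x y * (if h ≤ ψ y ^ 2 then (1 : ℝ) else 0))) = P h - Cr h := by
    rw [hP_def, hCr_def, ← Finset.sum_sub_distrib]
    refine Finset.sum_congr rfl fun x _ => ?_
    have hIx : (if h ≤ ψ x ^ 2 then (1:ℝ) else 0) * (if h ≤ ψ x ^ 2 then (1:ℝ) else 0)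
        = (if h ≤ ψ x ^ 2 then (1:ℝ) else 0) := by split_ifs <;> norm_num
    rw [mul_sub]
    congr 1
    · rw [show π x * (if h ≤ ψ x ^ 2 then (1:ℝ) else 0) * (if h ≤ ψ x ^ 2 then (1:ℝ) else 0)
        = π x * ((if h ≤ ψ x ^ 2 then (1:ℝ) else 0) * (if h ≤ ψ x ^ 2 then (1:ℝ) else 0))
        from by ring, hIx]
    · rw [Finset.mul_sum]
      exact Finset.sum_congr rfl fun y _ => by simp only [hq_def]; ring
  rw [hEcut, div_le_iff₀ hPh]
  have hFh' : 0 ≤ C * P h - P h + Cr h := hFh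
  linarith
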